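/- The subgroup of the wreath product C_2 ≀ Sym_k consisting of pairs (τ, σ) such that for every j, the component τ^j ∈ C_2 = Z/2 equals σ^{-1}(j) - j modulo 2, is well-defined (closed under the group operation and inverses) when k is even, and the projection of this subgroup to Sym_k is an isomorphism onto Sym_k. -/

import Mathlib

/-- The action of `Sym_k` on `Γ^k` by permuting components, as a homomorphism into `MulAut`. -/
def permMulAut (Γ : Type*) [Group Γ] (k : ℕ) :
    Equiv.Perm (Fin k) →* MulAut (Fin k → Γ) where
  toFun σ :=
    { toFun := fun γ j => γ (σ⁻¹ j)
      invFun := fun γ j => γ (σ j)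
      left_inv := fun γ => by funext j; simp
      right_inv := fun γ => by funext j; simp
      map_mul' := fun γ₁ γ₂ => rfl }
  map_one' := by ext γ j; simp
  map_mul' σ₁ σ₂ := by ext γ j; simp [Equiv.Perm.mul_apply]

/-- The wreath product `Γ ≀ Sym_k`, i.e. the semidirect product `Γ^k ⋊ Sym_k` where `Sym_k`
acts by permuting the `k` components. -/
def WreathProduct (Γ : Type*) [Group Γ] (k : ℕ) :=
  SemidirectProduct (Fin k → Γ) (Equiv.Perm (Fin k)) (permMulAut Γ k)

instance (Γ : Type*) [Group Γ] (k : ℕ) : Group (WreathProduct Γ k) :=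
  inferInstanceAs (Group (SemidirectProduct _ _ _))


/-- The subset of `C_2 ≀ Sym_k` consisting of pairs `(τ, σ)` with `τ^j = σ⁻¹(j) - j (mod 2)`
for every `j`. -/
def parityGraphSet (k : ℕ) : Set (WreathProduct (Multiplicative (ZMod 2)) k) :=
  {x | ∀ j : Fin k,
    SemidirectProduct.left x j =
      Multiplicative.ofAdd
        ((((SemidirectProduct.right x)⁻¹ j : Fin k).val : ZMod 2) - ((j.val : ℕ) : ZMod 2))}

/-- For `k` even, the set of pairs `(τ, σ) ∈ C_2 ≀ Sym_k` with `τ^j ≡ σ⁻¹(j) - j (mod 2)` is a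
subgroup (closed under multiplication and inverses), and the projection of this subgroup to
`Sym_k` is an isomorphism onto `Sym_k` (i.e. it is bijective). -/
theorem parityGraphSet_subgroup_and_proj_iso (k : ℕ) (hk : Even k) :
    (∀ x ∈ parityGraphSet k, ∀ y ∈ parityGraphSet k, x * y ∈ parityGraphSet k) ∧
    (∀ x ∈ parityGraphSet k, x⁻¹ ∈ parityGraphSet k) ∧
    Function.Bijective
      (fun x : parityGraphSet k => SemidirectProduct.right (x : WreathProduct (Multiplicative (ZMod 2)) k)) := by
  refine ⟨?_, ?_, ?_, ?_⟩
  · intro x hx y hy j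
    have h1 : SemidirectProduct.left (x * y) j
        = SemidirectProduct.left x j *
          SemidirectProduct.left y ((SemidirectProduct.right x)⁻¹ j) := rfl
    have h2 : SemidirectProduct.right (x * y)
        = SemidirectProduct.right x * SemidirectProduct.right y := rfl
    rw [h1, hx j, hy ((SemidirectProduct.right x)⁻¹ j), h2, ← ofAdd_add]
    congr 1
    simp [Equiv.Perm.inv_def, Equiv.Perm.mul_apply]
  · intro x hx j
    have h1 : SemidirectProduct.left (x⁻¹ : WreathProduct (Multiplicative (ZMod 2)) k) j
        = (SemidirectProduct.left x (SemidirectProduct.right x j))⁻¹ := rfl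
    have h2 : SemidirectProduct.right (x⁻¹ : WreathProduct (Multiplicative (ZMod 2)) k) = (SemidirectProduct.right x)⁻¹ := rfl
    rw [h1, hx (SemidirectProduct.right x j), h2, ← ofAdd_neg]
    congr 1
    simp
  · rintro ⟨x, hx⟩ ⟨y, hy⟩ h
    simp only [Subtype.mk.injEq] at h ⊢
    have hl : SemidirectProduct.left x = SemidirectProduct.left y := by
      funext j
      rw [hx j, hy j, h]
    exact SemidirectProduct.ext hl h
  · intro σ
    refine ⟨⟨⟨fun j => Multiplicative.ofAdd
        (((σ⁻¹ j : Fin k).val : ZMod 2) - ((j.val : ℕ) : ZMod 2)), σ⟩, fun j => rfl⟩, rfl⟩
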